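/- Let β=(β_n)_{n∈ℕ} be a Cantor base with x_β<+∞. The sets Δ'_β and Σ'_β are both shift-invariant: σ(Δ'_β)⊆Δ'_β and σ(Σ'_β)⊆Σ'_β. -/

import Mathlib

open Filter Topology

/-- A Cantor real base: a sequence of reals `> 1` whose infinite product diverges to `+∞`. -/
structure IsCantorBase (β : ℕ → ℝ) : Prop where
  one_lt : ∀ n, 1 < β n
  prod_tendsto : Tendsto (fun N => ∏ i ∈ Finset.range N, β i) atTop atTop

/-- The product `β_0 ⋯ β_n`. -/
noncomputable def prodUpTo (β : ℕ → ℝ) (n : ℕ) : ℝ := ∏ i ∈ Finset.range (n + 1), β i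

/-- The shifted base `β^(n) = (β_n, β_{n+1}, …)`. -/
def shiftBase (β : ℕ → ℝ) (n : ℕ) : ℕ → ℝ := fun m => β (n + m)

/-- `x_β = Σ_{n} (⌈β_n⌉ - 1)/(β_0 ⋯ β_n)`. -/
noncomputable def xB (β : ℕ → ℝ) : ℝ := ∑' n, ((⌈β n⌉ : ℝ) - 1) / prodUpTo β n

/-- The condition `x_β < +∞`, i.e. the series defining `x_β` converges. -/
def XBSummable (β : ℕ → ℝ) : Prop :=
  Summable (fun n => ((⌈β n⌉ : ℝ) - 1) / prodUpTo β n)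

/-- `val_β(a) = Σ_n a_n/(β_0 ⋯ β_n)`. -/
noncomputable def valB (β : ℕ → ℝ) (a : ℕ → ℤ) : ℝ := ∑' n, (a n : ℝ) / prodUpTo β n

/-- The digit condition `a_n ∈ [[0, ⌈β_n⌉ - 1]]` for all `n`. -/
def validWord (β : ℕ → ℝ) (a : ℕ → ℤ) : Prop := ∀ n, 0 ≤ a n ∧ a n ≤ ⌈β n⌉ - 1

/-- The flip map `θ_β`. -/
noncomputable def theta (β : ℕ → ℝ) (a : ℕ → ℤ) : ℕ → ℤ := fun n => ⌈β n⌉ - 1 - a n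

/-- The greedy remainders `r_{β,n}(x)`. -/
noncomputable def greedyR (β : ℕ → ℝ) (x : ℝ) : ℕ → ℝ
  | 0 => β 0 * x - (⌊β 0 * x⌋ : ℝ)
  | n + 1 => β (n + 1) * greedyR β x n - (⌊β (n + 1) * greedyR β x n⌋ : ℝ)

/-- The greedy digits `ε_{β,n}(x)`; `greedyDigit β x` is the greedy β-expansion `d_β(x)`. -/
noncomputable def greedyDigit (β : ℕ → ℝ) (x : ℝ) : ℕ → ℤ
  | 0 => ⌊β 0 * x⌋
  | n + 1 => ⌊β (n + 1) * greedyR β x n⌋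

/-- The lazy remainders `s_{β,n}(x)`. -/
noncomputable def lazyS (β : ℕ → ℝ) (x : ℝ) : ℕ → ℝ
  | 0 => β 0 * x - (⌈β 0 * x - xB (shiftBase β 1)⌉ : ℝ)
  | n + 1 => β (n + 1) * lazyS β x n -
      (⌈β (n + 1) * lazyS β x n - xB (shiftBase β (n + 2))⌉ : ℝ)

/-- The lazy digits `ξ_{β,n}(x)`; `lazyDigit β x` is the lazy β-expansion `ℓ_β(x)`. -/
noncomputable def lazyDigit (β : ℕ → ℝ) (x : ℝ) : ℕ → ℤ
  | 0 => ⌈β 0 * x - xB (shiftBase β 1)⌉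
  | n + 1 => ⌈β (n + 1) * lazyS β x n - xB (shiftBase β (n + 2))⌉

/-- Strict lexicographic order on infinite words. -/
def lexLt (a b : ℕ → ℤ) : Prop := ∃ k, (∀ i < k, a i = b i) ∧ a k < b k

/-- Lexicographic order on infinite words. -/
def lexLe (a b : ℕ → ℤ) : Prop := lexLt a b ∨ a = b

/-- `D_β`, the set of greedy β-expansions of points of `[0,1)`. -/
def greedySet (β : ℕ → ℝ) : Set (ℕ → ℤ) :=
  {a | ∃ x ∈ Set.Ico (0 : ℝ) 1, a = greedyDigit β x}

/-- `D'_β`, the set of lazy β-expansions of points of `(x_β - 1, x_β]`. -/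
def lazySet (β : ℕ → ℝ) : Set (ℕ → ℤ) :=
  {a | ∃ x ∈ Set.Ioc (xB β - 1) (xB β), a = lazyDigit β x}

/-- `Δ'_β = ⋃_n D'_{β^(n)}`. -/
def deltaSet (β : ℕ → ℝ) : Set (ℕ → ℤ) := ⋃ n, lazySet (shiftBase β n)

lemma shiftBase_shiftBase (β : ℕ → ℝ) (n k : ℕ) :
    shiftBase (shiftBase β n) k = shiftBase β (n + k) := by
  funext m; simp [shiftBase, add_assoc]

lemma lazyS_shift (β : ℕ → ℝ) (x : ℝ) :
    ∀ n, lazyS (shiftBase β 1) (lazyS β x 0) n = lazyS β x (n + 1) := by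
  intro n
  induction n with
  | zero =>
    show shiftBase β 1 0 * lazyS β x 0 -
        (⌈shiftBase β 1 0 * lazyS β x 0 - xB (shiftBase (shiftBase β 1) 1)⌉ : ℝ) = _
    rw [shiftBase_shiftBase]
    rfl
  | succ n ih =>
    show shiftBase β 1 (n + 1) * lazyS (shiftBase β 1) (lazyS β x 0) n -
        (⌈shiftBase β 1 (n + 1) * lazyS (shiftBase β 1) (lazyS β x 0) n -
          xB (shiftBase (shiftBase β 1) (n + 2))⌉ : ℝ) = _
    rw [shiftBase_shiftBase, ih]
    have h1 : shiftBase β 1 (n + 1) = β (n + 2) := by simp [shiftBase]; ring_nf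
    have h2 : 1 + (n + 2) = n + 3 := by ring
    rw [h1, h2]
    rfl

lemma lazyDigit_shift (β : ℕ → ℝ) (x : ℝ) (n : ℕ) :
    lazyDigit (shiftBase β 1) (lazyS β x 0) n = lazyDigit β x (n + 1) := by
  cases n with
  | zero =>
    show ⌈shiftBase β 1 0 * lazyS β x 0 - xB (shiftBase (shiftBase β 1) 1)⌉ = _
    rw [shiftBase_shiftBase]
    rfl
  | succ n =>
    show ⌈shiftBase β 1 (n + 1) * lazyS (shiftBase β 1) (lazyS β x 0) n -
          xB (shiftBase (shiftBase β 1) (n + 2))⌉ = _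
    rw [shiftBase_shiftBase, lazyS_shift]
    have h1 : shiftBase β 1 (n + 1) = β (n + 2) := by simp [shiftBase]; ring_nf
    have h2 : 1 + (n + 2) = n + 3 := by ring
    rw [h1, h2]
    rfl

lemma lazyS_mem (β : ℕ → ℝ) (x : ℝ) :
    lazyS β x 0 ∈ Set.Ioc (xB (shiftBase β 1) - 1) (xB (shiftBase β 1)) := by
  set z : ℝ := β 0 * x - xB (shiftBase β 1) with hz
  have h0 : lazyS β x 0 = xB (shiftBase β 1) + (z - ⌈z⌉) := by
    show β 0 * x - (⌈β 0 * x - xB (shiftBase β 1)⌉ : ℝ) = _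
    rw [← hz]; ring
  constructor
  · rw [h0]
    have := Int.ceil_lt_add_one z
    linarith
  · rw [h0]
    have := Int.le_ceil z
    linarith

/-- `Δ'_β` and `Σ'_β` are shift-invariant. -/
theorem deltaSet_shift_invariant (β : ℕ → ℝ) (hβ : IsCantorBase β) (hx : XBSummable β) :
    (∀ a ∈ deltaSet β, (fun m => a (m + 1)) ∈ deltaSet β) ∧
    (∀ a ∈ closure (deltaSet β), (fun m => a (m + 1)) ∈ closure (deltaSet β)) := by
  have hmain : ∀ a ∈ deltaSet β, (fun m => a (m + 1)) ∈ deltaSet β := by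
    rintro a ⟨S, ⟨n, rfl⟩, x, hx', rfl⟩
    refine Set.mem_iUnion.2 ⟨n + 1, lazyS (shiftBase β n) x 0, ?_, ?_⟩
    · have := lazyS_mem (shiftBase β n) x
      rwa [shiftBase_shiftBase] at this
    · funext m
      have := lazyDigit_shift (shiftBase β n) x m
      rw [shiftBase_shiftBase] at this
      exact this.symm
  refine ⟨hmain, fun a ha => ?_⟩
  have hcont : Continuous (fun (a : ℕ → ℤ) (m : ℕ) => a (m + 1)) :=
    continuous_pi fun m => continuous_apply (m + 1)
  have h1 : (fun m => a (m + 1)) ∈ closure ((fun (a : ℕ → ℤ) (m : ℕ) => a (m + 1)) '' deltaSet β) :=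
    image_closure_subset_closure_image hcont ⟨a, ha, rfl⟩
  refine closure_mono ?_ h1
  rintro b ⟨c, hc, rfl⟩
  exact hmain c hc
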